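/- Let R ∈ (0, +∞], let λ, μ : [0,R) → ℝ be smooth positive functions, let H > 0 be a constant, and define c(r) = r⁻²∫₀^r s·λ(s)²·μ(s) ds and g₂(r) = 2Hr·c(r)/(λ(r)·μ(r)) for r ∈ (0,R). If ρ_H ∈ (0,R) satisfies g₂(ρ_H) = 1 and g₂′(ρ_H) = 0, then (λμ)′(ρ_H)/(λ(ρ_H)²·μ(ρ_H)) + 1/(ρ_H·λ(ρ_H)) = 2H; that is, the vertical cylinder over the circle of radius ρ_H in 𝔼(M,0,μ) has constant mean curvature equal to H. -/

import Mathlib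

open Topology

noncomputable def cProfile (lam mu : ℝ → ℝ) (r : ℝ) : ℝ :=
  (r ^ 2)⁻¹ * ∫ s in (0:ℝ)..r, s * lam s ^ 2 * mu s

noncomputable def g2 (lam mu : ℝ → ℝ) (H r : ℝ) : ℝ :=
  2 * H * r * cProfile lam mu r / (lam r * mu r)

/-- If `g₂(ρ_H) = 1` and `g₂′(ρ_H) = 0`, then the vertical cylinder over the circle of
radius `ρ_H` in `𝔼(M,0,μ)` has constant mean curvature `H`:
`(λμ)′(ρ_H)/(λ(ρ_H)²μ(ρ_H)) + 1/(ρ_H·λ(ρ_H)) = 2H`. -/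
theorem cylinder_bounding_cigar_has_mean_curvature_H
    (S : Set ℝ) (hS : S = Set.Ici 0 ∨ ∃ R : ℝ, 0 < R ∧ S = Set.Ico 0 R)
    (lam mu : ℝ → ℝ)
    (hlam : ContDiffOn ℝ (⊤ : ℕ∞) lam S) (hmu : ContDiffOn ℝ (⊤ : ℕ∞) mu S)
    (hlampos : ∀ r ∈ S, 0 < lam r) (hmupos : ∀ r ∈ S, 0 < mu r)
    (H : ℝ) (hH : 0 < H)
    (ρH : ℝ) (hρH : ρH ∈ S) (hρHpos : 0 < ρH)
    (heq : g2 lam mu H ρH = 1)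
    (hder : deriv (g2 lam mu H) ρH = 0) :
    deriv (fun r => lam r * mu r) ρH / (lam ρH ^ 2 * mu ρH)
      + 1 / (ρH * lam ρH) = 2 * H := by
  obtain ⟨U, hUo, hρU, hUS⟩ : ∃ U : Set ℝ, IsOpen U ∧ ρH ∈ U ∧ U ⊆ S := by
    rcases hS with h | ⟨R, hR, h⟩
    · exact ⟨Set.Ioi 0, isOpen_Ioi, hρHpos, h ▸ Set.Ioi_subset_Ici_self⟩
    · have hlt : ρH < R := (h ▸ hρH : ρH ∈ Set.Ico 0 R).2
      exact ⟨Set.Ioo 0 R, isOpen_Ioo, ⟨hρHpos, hlt⟩, h ▸ Set.Ioo_subset_Ico_self⟩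
  have hIcc : Set.Icc (0:ℝ) ρH ⊆ S := by
    rcases hS with h | ⟨R, hR, h⟩
    · rw [h]; exact fun x hx => hx.1
    · rw [h]
      have hlt : ρH < R := (h ▸ hρH : ρH ∈ Set.Ico 0 R).2
      exact fun x hx => ⟨hx.1, lt_of_le_of_lt hx.2 hlt⟩
  have hmem : S ∈ 𝓝 ρH := Filter.mem_of_superset (hUo.mem_nhds hρU) hUS
  have hlamd : HasDerivAt lam (deriv lam ρH) ρH :=
    ((hlam.contDiffAt hmem).differentiableAt (by simp)).hasDerivAt
  have hmud : HasDerivAt mu (deriv mu ρH) ρH :=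
    ((hmu.contDiffAt hmem).differentiableAt (by simp)).hasDerivAt
  have hfc : ContinuousOn (fun s => s * lam s ^ 2 * mu s) S :=
    ((continuousOn_id.mul ((hlam.continuousOn).pow 2)).mul (hmu.continuousOn))
  have hint : IntervalIntegrable (fun s => s * lam s ^ 2 * mu s) MeasureTheory.volume 0 ρH :=
    (hfc.mono hIcc).intervalIntegrable_of_Icc hρHpos.le
  have hmeasAt : StronglyMeasurableAtFilter (fun s => s * lam s ^ 2 * mu s) (𝓝 ρH) :=
    ⟨U, hUo.mem_nhds hρU, ((hfc.mono hUS).aestronglyMeasurable hUo.measurableSet)⟩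
  have hfcont : ContinuousAt (fun s => s * lam s ^ 2 * mu s) ρH := hfc.continuousAt hmem
  have hF : HasDerivAt (fun r => ∫ s in (0:ℝ)..r, s * lam s ^ 2 * mu s)
      (ρH * lam ρH ^ 2 * mu ρH) ρH :=
    intervalIntegral.integral_hasDerivAt_right hint hmeasAt hfcont
  have hpow : HasDerivAt (fun r : ℝ => (r ^ 2)⁻¹)
      (-(2 * ρH ^ 1) / (ρH ^ 2) ^ 2) ρH := by
    have := (hasDerivAt_pow 2 ρH).inv (by positivity)
    exact this.congr_deriv (by norm_num)
  have hc : HasDerivAt (cProfile lam mu)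
      (-(2 * ρH ^ 1) / (ρH ^ 2) ^ 2 * (∫ s in (0:ℝ)..ρH, s * lam s ^ 2 * mu s)
        + (ρH ^ 2)⁻¹ * (ρH * lam ρH ^ 2 * mu ρH)) ρH := hpow.mul hF
  have hnum : HasDerivAt (fun r => 2 * H * r * cProfile lam mu r)
      (2 * H * 1 * cProfile lam mu ρH + 2 * H * ρH *
        (-(2 * ρH ^ 1) / (ρH ^ 2) ^ 2 * (∫ s in (0:ℝ)..ρH, s * lam s ^ 2 * mu s)
          + (ρH ^ 2)⁻¹ * (ρH * lam ρH ^ 2 * mu ρH))) ρH := by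
    exact (((hasDerivAt_id ρH).const_mul (2 * H)).mul hc)
  have hL := hlampos ρH hρH
  have hM := hmupos ρH hρH
  have hden : HasDerivAt (fun r => lam r * mu r)
      (deriv lam ρH * mu ρH + lam ρH * deriv mu ρH) ρH := hlamd.mul hmud
  have hg2 := hnum.div hden (show lam ρH * mu ρH ≠ 0 by positivity)
  have hD0 := hg2.deriv.symm.trans hder
  have hdenderiv := hden.deriv
  rw [hdenderiv]
  -- abbreviations
  set L := lam ρH with hLdef
  set M := mu ρH with hMdef
  set L' := deriv lam ρH
  set M' := deriv mu ρH
  set c0 := cProfile lam mu ρH with hc0def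
  have hFval : (∫ s in (0:ℝ)..ρH, s * lam s ^ 2 * mu s) = ρH ^ 2 * c0 := by
    rw [hc0def, cProfile]
    field_simp
  rw [hFval] at hD0
  have heq' : 2 * H * ρH * c0 = L * M := by
    have : 2 * H * ρH * c0 / (L * M) = 1 := heq
    field_simp at this
    linarith
  have hρ := hρHpos
  field_simp at hD0
  have hD0' : 2*H*L*M*(L^2*M - c0) - 2*H*ρH*c0*(L'*M + L*M') = 0 := by
    apply mul_left_cancel₀ (show (ρH:ℝ)^6 ≠ 0 by positivity)
    rw [mul_zero]
    linear_combination ρH ^ 6 * hD0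
  have hkey : 2*H*ρH*L^3*M^2 - L^2*M^2 - ρH*L*M*(L'*M+L*M') = 0 := by
    linear_combination ρH * hD0' + (L*M + ρH*(L'*M+L*M')) * heq'
  have hkey2 : 2*H*ρH*L^2*M - L*M - ρH*(L'*M+L*M') = 0 := by
    apply mul_left_cancel₀ (show L*M ≠ 0 by positivity)
    rw [mul_zero]
    linear_combination hkey
  field_simp
  linear_combination (-1 : ℝ) * hkey2
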